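/- Compatibility of Hopf ideals with the Birkhoff decomposition: let H be a connected graded commutative Hopf algebra, I a graded Hopf ideal, K = K₋ ⊕ K₊ with Rota–Baxter projection T onto K₋, and φ : H → K an algebra homomorphism with φ(I) = 0. Then both parts of the Birkhoff decomposition vanish on I: φ₋(I) = 0 and φ₊(I) = 0. -/

import Mathlib

open TensorProduct

/-- The image of `p ⊗ q` inside `H ⊗ H`, for submodules `p q : Submodule k H`. -/
noncomputable def subTmul {k H : Type*} [CommRing k] [AddCommGroup H] [Module k H]
    (p q : Submodule k H) : Submodule k (H ⊗[k] H) :=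
  LinearMap.range (TensorProduct.mapIncl p q)

/-- Convolution product of linear maps from a coalgebra to an algebra. -/
noncomputable def conv {k H A : Type*} [CommRing k] [AddCommGroup H] [Module k H]
    [Coalgebra k H] [Ring A] [Algebra k A] (f g : H →ₗ[k] A) : H →ₗ[k] A :=
  LinearMap.mul' k A ∘ₗ TensorProduct.map f g ∘ₗ Coalgebra.comul

/-- Induction principle for membership in `subTmul p q`. -/
theorem subTmul_induction {k H : Type*} [CommRing k] [AddCommGroup H] [Module k H]
    {p q : Submodule k H} {P : H ⊗[k] H → Prop} {t : H ⊗[k] H} (ht : t ∈ subTmul p q)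
    (zero : P 0)
    (tmul : ∀ a ∈ p, ∀ b ∈ q, P (a ⊗ₜ[k] b))
    (add : ∀ u v, P u → P v → P (u + v)) : P t := by
  obtain ⟨s, rfl⟩ := ht
  induction s using TensorProduct.induction_on with
  | zero => simpa using zero
  | tmul a b => simpa [TensorProduct.mapIncl] using tmul a a.2 b b.2
  | add u v hu hv => rw [map_add]; exact add _ _ hu hv

theorem tmul_mem_subTmul {k H : Type*} [CommRing k] [AddCommGroup H] [Module k H]
    {p q : Submodule k H} {a b : H} (ha : a ∈ p) (hb : b ∈ q) :
    a ⊗ₜ[k] b ∈ subTmul p q :=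
  ⟨⟨a, ha⟩ ⊗ₜ[k] ⟨b, hb⟩, by simp [TensorProduct.mapIncl]⟩

/-- Compatibility of Hopf ideals with the Birkhoff decomposition:
if `φ : H → K` vanishes on a graded Hopf ideal `I`, then both parts `φ₋` and
`φ₊ = φ₋ * φ` of its Birkhoff decomposition vanish on `I`. -/
theorem birkhoff_decomposition_compatible_with_hopf_ideal
    {k H K : Type*} [Field k] [CommRing H] [HopfAlgebra k H]
    [CommRing K] [Algebra k K]
    (ℬ : ℕ → Submodule k H)
    (hinternal : DirectSum.IsInternal ℬ)
    (hconn : ℬ 0 = Submodule.span k {(1 : H)})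
    (hgraded : ∀ n, ∀ x ∈ ℬ n,
      (Coalgebra.comul (R := k) x : H ⊗[k] H) ∈
        ⨆ p : {p : ℕ × ℕ // p.1 + p.2 = n}, subTmul (ℬ p.1.1) (ℬ p.1.2))
    -- the splitting K = K₋ ⊕ K₊ with Rota–Baxter projection T
    (T : K →ₗ[k] K)
    (hT : T ∘ₗ T = T)
    (hKneg : ∀ a ∈ LinearMap.range T, ∀ b ∈ LinearMap.range T, a * b ∈ LinearMap.range T)
    (hKpos : ∀ a ∈ LinearMap.ker T, ∀ b ∈ LinearMap.ker T, a * b ∈ LinearMap.ker T)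
    (hT1 : T (1 : K) = 0)
    (hRB : ∀ a b : K, T a * T b = T (T a * b + a * T b - a * b))
    -- the graded Hopf ideal I
    (I : Ideal H)
    (hIgr : I.restrictScalars k = ⨆ n, I.restrictScalars k ⊓ ℬ n)
    (hΔI : ∀ x ∈ I, (Coalgebra.comul (R := k) x : H ⊗[k] H) ∈
        subTmul (I.restrictScalars k) (⊤ : Submodule k H) ⊔
        subTmul (⊤ : Submodule k H) (I.restrictScalars k))
    (hεI : ∀ x ∈ I, Coalgebra.counit (R := k) x = (0 : k))
    (hSI : ∀ x ∈ I, HopfAlgebra.antipode (R := k) x ∈ I)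
    -- the character φ, vanishing on I, and its Birkhoff negative part φ₋
    (φ : H →ₐ[k] K) (hφI : ∀ x ∈ I, φ x = 0)
    (φm : H →ₗ[k] K)
    (hφm1 : φm (1 : H) = 1)
    (hrec : ∀ x ∈ LinearMap.ker (Coalgebra.counit (R := k) (A := H)),
      φm x = -T (φ x + LinearMap.mul' k K
        ((TensorProduct.map φm φ.toLinearMap)
          (Coalgebra.comul (R := k) x - x ⊗ₜ[k] (1 : H) - (1 : H) ⊗ₜ[k] x)))) :
    (∀ x ∈ I, φm x = 0) ∧
    (∀ x ∈ I, conv φm φ.toLinearMap x = 0) := by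
    classical
  set Δ : H →ₗ[k] H ⊗[k] H := Coalgebra.comul (R := k) with hΔdef
  set ε : H →ₗ[k] k := Coalgebra.counit (R := k) with hεdef
  set e : DirectSum ℕ (fun i => ℬ i) ≃ₗ[k] H :=
    LinearEquiv.ofBijective (DirectSum.coeLinearMap ℬ) hinternal with he
  set π : ℕ → H →ₗ[k] H := fun n =>
    (ℬ n).subtype ∘ₗ (DirectSum.component k ℕ (fun i => ℬ i) n) ∘ₗ e.symm.toLinearMap
    with hπdef
  have hπ_apply : ∀ n x, π n x = ((e.symm x) n : H) := fun n x => rfl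
  have hπ_mem : ∀ n x, π n x ∈ ℬ n := fun n x => ((e.symm x) n).2
  have hπ_same : ∀ n, ∀ x ∈ ℬ n, π n x = x := by
    intro n x hx
    rw [hπ_apply, hinternal.ofBijective_coeLinearMap_of_mem hx]
  have hπ_ne : ∀ m n, n ≠ m → ∀ x ∈ ℬ n, π m x = 0 := by
    intro m n hnm x hx
    rw [hπ_apply, hinternal.ofBijective_coeLinearMap_of_mem_ne hnm hx,
      ZeroMemClass.coe_zero]
  -- the double projections on H ⊗ H
  set Q : ℕ → ℕ → (H ⊗[k] H) →ₗ[k] (H ⊗[k] H) :=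
    fun p q => TensorProduct.map (π p) (π q) with hQdef
  have hQ_mem : ∀ p q t, Q p q t ∈ subTmul (ℬ p) (ℬ q) := by
    intro p q t
    induction t using TensorProduct.induction_on with
    | zero => simpa using Submodule.zero_mem _
    | tmul a b =>
      simpa [hQdef] using tmul_mem_subTmul (hπ_mem p a) (hπ_mem q b)
    | add u v hu hv => rw [map_add]; exact Submodule.add_mem _ hu hv
  have hQ_subTmul : ∀ p q a b, ∀ t ∈ subTmul (ℬ a) (ℬ b),
      Q p q t = if p = a ∧ q = b then t else 0 := by
    intro p q a b t ht
    refine subTmul_induction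
      (P := fun s => Q p q s = if p = a ∧ q = b then s else 0) ht (by simp) ?_ ?_
    · intro u hu v hv
      by_cases hpq : p = a ∧ q = b
      · obtain ⟨rfl, rfl⟩ := hpq
        simp [hQdef, hπ_same _ _ hu, hπ_same _ _ hv]
      · rw [if_neg hpq]
        rcases not_and_or.1 hpq with hpa | hqb
        · have h0 : π p u = 0 := hπ_ne p a (fun h => hpa h.symm) u hu
          simp [hQdef, h0]
        · have h0 : π q v = 0 := hπ_ne q b (fun h => hqb h.symm) v hv
          simp [hQdef, h0]
    · intro u v hu hv
      rw [map_add, hu, hv]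
      by_cases hpq : p = a ∧ q = b
      · simp [if_pos hpq]
      · simp [if_neg hpq]
  have hdecomp : ∀ n, ∀ t ∈ (⨆ p : {p : ℕ × ℕ // p.1 + p.2 = n},
      subTmul (ℬ p.1.1) (ℬ p.1.2)),
      ∑ p ∈ Finset.range (n + 1), Q p (n - p) t = t := by
    intro n t ht
    refine Submodule.iSup_induction (x := t)
      (motive := fun t => ∑ p ∈ Finset.range (n + 1), Q p (n - p) t = t) _ ht ?_ (by simp) ?_
    · rintro ⟨⟨a, b⟩, hab⟩ u hu
      have ha : a ∈ Finset.range (n + 1) := by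
        simp only [Finset.mem_range]; omega
      rw [Finset.sum_eq_single_of_mem a ha]
      · rw [hQ_subTmul a (n - a) a b u hu, if_pos ⟨rfl, by omega⟩]
      · intro p hp hpa
        rw [hQ_subTmul p (n - p) a b u hu, if_neg (by tauto)]
    · intro u v hu hv
      simp only [map_add, Finset.sum_add_distrib, hu, hv]
  have hε1 : ε (1 : H) = 1 := by simp [hεdef]
  -- elements of subTmul (ℬ 0) S are of the form 1 ⊗ y, and symmetrically
  have hsub0 : ∀ (S : Submodule k H), ∀ t ∈ subTmul (ℬ 0) S,
      ∃ y ∈ S, t = (1 : H) ⊗ₜ[k] y := by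
    intro S t ht
    refine subTmul_induction (P := fun s => ∃ y ∈ S, s = (1 : H) ⊗ₜ[k] y) ht
      ⟨0, S.zero_mem, by simp⟩ ?_ ?_
    · intro a ha b hb
      rw [hconn, Submodule.mem_span_singleton] at ha
      obtain ⟨c, rfl⟩ := ha
      exact ⟨c • b, S.smul_mem c hb, by rw [smul_tmul]⟩
    · rintro u v ⟨y, hy, rfl⟩ ⟨y', hy', rfl⟩
      exact ⟨y + y', S.add_mem hy hy', (TensorProduct.tmul_add _ _ _).symm⟩
  have hsub0' : ∀ (S : Submodule k H), ∀ t ∈ subTmul S (ℬ 0),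
      ∃ y ∈ S, t = y ⊗ₜ[k] (1 : H) := by
    intro S t ht
    refine subTmul_induction (P := fun s => ∃ y ∈ S, s = y ⊗ₜ[k] (1 : H)) ht
      ⟨0, S.zero_mem, by simp⟩ ?_ ?_
    · intro a ha b hb
      rw [hconn, Submodule.mem_span_singleton] at hb
      obtain ⟨c, rfl⟩ := hb
      exact ⟨c • a, S.smul_mem c ha, by rw [tmul_smul, smul_tmul']⟩
    · rintro u v ⟨y, hy, rfl⟩ ⟨y', hy', rfl⟩
      exact ⟨y + y', S.add_mem hy hy', (TensorProduct.add_tmul _ _ _).symm⟩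
  -- the two counit contractions
  set E : H ⊗[k] H →ₗ[k] H :=
    (TensorProduct.lid k H).toLinearMap ∘ₗ LinearMap.rTensor H ε with hEdef
  have hE_tmul : ∀ a b : H, E (a ⊗ₜ[k] b) = ε a • b := by
    intro a b; simp [hEdef]
  have hEΔ : ∀ x : H, E (Δ x) = x := by
    intro x; simp [hEdef, hΔdef, hεdef]
  set E' : H ⊗[k] H →ₗ[k] H :=
    (TensorProduct.rid k H).toLinearMap ∘ₗ LinearMap.lTensor H ε with hE'def
  have hE'_tmul : ∀ a b : H, E' (a ⊗ₜ[k] b) = ε b • a := by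
    intro a b; simp [hE'def]
  have hE'Δ : ∀ x : H, E' (Δ x) = x := by
    intro x; simp [hE'def, hΔdef, hεdef]
  have hE_mem : ∀ (S S' : Submodule k H), ∀ t ∈ subTmul S S', E t ∈ S' := by
    intro S S' t ht
    refine subTmul_induction (P := fun s => E s ∈ S') ht
      (by simp) ?_ ?_
    · intro a _ b hb; rw [hE_tmul]; exact S'.smul_mem _ hb
    · intro u v hu hv; rw [map_add]; exact S'.add_mem hu hv
  have hE'_mem : ∀ (S S' : Submodule k H), ∀ t ∈ subTmul S S', E' t ∈ S := by
    intro S S' t ht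
    refine subTmul_induction (P := fun s => E' s ∈ S) ht
      (by simp) ?_ ?_
    · intro a ha b _; rw [hE'_tmul]; exact S.smul_mem _ ha
    · intro u v hu hv; rw [map_add]; exact S.add_mem hu hv
  -- the extreme components of the coproduct of a homogeneous element
  have hQ0n : ∀ n, 0 < n → ∀ x ∈ ℬ n, Q 0 n (Δ x) = (1 : H) ⊗ₜ[k] x := by
    intro n hn x hx
    obtain ⟨y, hy, hQy⟩ := hsub0 (ℬ n) _ (hQ_mem 0 n (Δ x))
    have hsum : ∑ p ∈ Finset.range (n + 1), Q p (n - p) (Δ x) = Δ x :=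
      hdecomp n (Δ x) (hgraded n x hx)
    have hxy : x = y := by
      have h1 : x = ∑ p ∈ Finset.range (n + 1), (π n) (E (Q p (n - p) (Δ x))) := by
        rw [← map_sum, ← map_sum, hsum, hEΔ, hπ_same n x hx]
      rw [Finset.sum_eq_single_of_mem 0 (Finset.mem_range.2 (by omega)) ?_] at h1
      · rw [Nat.sub_zero, hQy, hE_tmul, hε1, one_smul, hπ_same n y hy] at h1
        exact h1
      · intro p _ hp0
        exact hπ_ne n (n - p) (by omega) _
          (hE_mem (ℬ p) (ℬ (n - p)) _ (hQ_mem p (n - p) (Δ x)))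
    rw [hQy, hxy]
  have hQn0 : ∀ n, 0 < n → ∀ x ∈ ℬ n, Q n 0 (Δ x) = x ⊗ₜ[k] (1 : H) := by
    intro n hn x hx
    obtain ⟨y, hy, hQy⟩ := hsub0' (ℬ n) _ (hQ_mem n 0 (Δ x))
    have hsum : ∑ p ∈ Finset.range (n + 1), Q p (n - p) (Δ x) = Δ x :=
      hdecomp n (Δ x) (hgraded n x hx)
    have hxy : x = y := by
      have h1 : x = ∑ p ∈ Finset.range (n + 1), (π n) (E' (Q p (n - p) (Δ x))) := by
        rw [← map_sum, ← map_sum, hsum, hE'Δ, hπ_same n x hx]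
      rw [Finset.sum_eq_single_of_mem n (Finset.mem_range.2 (by omega)) ?_] at h1
      · rw [Nat.sub_self, hQy, hE'_tmul, hε1, one_smul, hπ_same n y hy] at h1
        exact h1
      · intro p _ hpn
        exact hπ_ne n p hpn _
          (hE'_mem (ℬ p) (ℬ (n - p)) _ (hQ_mem p (n - p) (Δ x)))
    rw [hQy, hxy]
  -- the ideal is graded: projections preserve it
  have hπI : ∀ p, ∀ x ∈ I, π p x ∈ I := by
    intro p x hx
    have hx' : x ∈ ⨆ n, Submodule.restrictScalars k I ⊓ ℬ n := by
      rw [← hIgr]; exact hx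
    refine Submodule.iSup_induction (x := x) (motive := fun y => π p y ∈ I) _ hx'
      ?_ (by simp) ?_
    · intro n y hy
      by_cases hnp : n = p
      · subst hnp; rw [hπ_same n y (Submodule.mem_inf.1 hy).2]; exact (Submodule.mem_inf.1 hy).1
      · rw [hπ_ne p n hnp y (Submodule.mem_inf.1 hy).2]; exact I.zero_mem
    · intro u v hu hv; rw [map_add]; exact I.add_mem hu hv
  -- the convolution-type map
  set L : H ⊗[k] H →ₗ[k] K :=
    LinearMap.mul' k K ∘ₗ TensorProduct.map φm φ.toLinearMap with hLdef
  have hL_tmul : ∀ a b : H, L (a ⊗ₜ[k] b) = φm a * φ b := by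
    intro a b; simp [hLdef, LinearMap.mul'_apply]
  have hL_left : ∀ (S S' : Submodule k H), (∀ a ∈ S, φm a = 0) →
      ∀ t ∈ subTmul S S', L t = 0 := by
    intro S S' hS t ht
    refine subTmul_induction (P := fun s => L s = 0) ht (map_zero L) ?_ ?_
    · intro a ha b _; rw [hL_tmul, hS a ha, zero_mul]
    · intro u v hu hv; rw [map_add, hu, hv, add_zero]
  have hL_right : ∀ (S S' : Submodule k H), (∀ b ∈ S', φ b = 0) →
      ∀ t ∈ subTmul S S', L t = 0 := by
    intro S S' hS t ht
    refine subTmul_induction (P := fun s => L s = 0) ht (map_zero L) ?_ ?_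
    · intro a _ b hb; rw [hL_tmul, hS b hb, mul_zero]
    · intro u v hu hv; rw [map_add, hu, hv, add_zero]
  -- projections of the coproduct of an element of I
  have hQI : ∀ p q, ∀ x ∈ I, Q p q (Δ x) ∈
      subTmul (Submodule.restrictScalars k I ⊓ ℬ p) ⊤ ⊔
      subTmul ⊤ (Submodule.restrictScalars k I ⊓ ℬ q) := by
    intro p q x hx
    obtain ⟨u, hu, v, hv, huv⟩ := Submodule.mem_sup.1 (hΔI x hx)
    rw [← huv, map_add]
    refine Submodule.add_mem _ (Submodule.mem_sup_left ?_) (Submodule.mem_sup_right ?_)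
    · refine subTmul_induction
        (P := fun s => Q p q s ∈ subTmul (Submodule.restrictScalars k I ⊓ ℬ p) ⊤) hu
        (by simp) ?_ ?_
      · intro a ha b _
        have hab : Q p q (a ⊗ₜ[k] b) = (π p a) ⊗ₜ[k] (π q b) := by simp [hQdef]
        rw [hab]
        exact tmul_mem_subTmul ⟨hπI p a ha, hπ_mem p a⟩ Submodule.mem_top
      · intro u' v' hu' hv'; rw [map_add]; exact Submodule.add_mem _ hu' hv'
    · refine subTmul_induction
        (P := fun s => Q p q s ∈ subTmul ⊤ (Submodule.restrictScalars k I ⊓ ℬ q)) hv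
        (by simp) ?_ ?_
      · intro a _ b hb
        have hab : Q p q (a ⊗ₜ[k] b) = (π p a) ⊗ₜ[k] (π q b) := by simp [hQdef]
        rw [hab]
        exact tmul_mem_subTmul Submodule.mem_top ⟨hπI q b hb, hπ_mem q b⟩
      · intro u' v' hu' hv'; rw [map_add]; exact Submodule.add_mem _ hu' hv'
  -- main induction on the degree
  have main : ∀ n, ∀ x, x ∈ I → x ∈ ℬ n → φm x = 0 := by
    intro n
    induction n using Nat.strong_induction_on with
    | _ n ih =>
    intro x hxI hxB
    rcases Nat.eq_zero_or_pos n with rfl | hn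
    · rw [hconn, Submodule.mem_span_singleton] at hxB
      obtain ⟨c, rfl⟩ := hxB
      have hc : c = 0 := by
        have h := hεI _ hxI
        rwa [map_smul, hε1, smul_eq_mul, mul_one] at h
      rw [hc, zero_smul, map_zero]
    · have hker : x ∈ LinearMap.ker ε := LinearMap.mem_ker.2 (hεI x hxI)
      have hφx : φ x = 0 := hφI x hxI
      have hsum : ∑ p ∈ Finset.range (n + 1), L (Q p (n - p) (Δ x)) = φm x := by
        rw [Finset.sum_eq_single_of_mem n (Finset.mem_range.2 (by omega)) ?_]
        · rw [Nat.sub_self, hQn0 n hn x hxB, hL_tmul, map_one, mul_one]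
        · intro p hp hpn
          rcases Nat.eq_zero_or_pos p with rfl | hp1
          · rw [Nat.sub_zero, hQ0n n hn x hxB, hL_tmul, hφx, mul_zero]
          · have hplt : p < n := by
              have := Finset.mem_range.1 hp; omega
            obtain ⟨u, hu, v, hv, huv⟩ := Submodule.mem_sup.1 (hQI p (n - p) x hxI)
            have hLu : L u = 0 :=
              hL_left _ _ (fun a ha => ih p hplt a (Submodule.mem_inf.1 ha).1 (Submodule.mem_inf.1 ha).2) u hu
            have hLv : L v = 0 :=
              hL_right _ _ (fun b hb => hφI b (Submodule.mem_inf.1 hb).1) v hv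
            rw [← huv, map_add, hLu, hLv, add_zero]
      have hΔsum : Δ x = ∑ p ∈ Finset.range (n + 1), Q p (n - p) (Δ x) :=
        (hdecomp n (Δ x) (hgraded n x hxB)).symm
      have hLmain : L (Δ x - x ⊗ₜ[k] (1 : H) - (1 : H) ⊗ₜ[k] x) = 0 := by
        rw [map_sub, map_sub, hΔsum, map_sum, hsum, hL_tmul, hL_tmul, map_one,
          mul_one, hφx, mul_zero, sub_zero, sub_self]
      have hr := hrec x hker
      rw [hφx] at hr
      have hLr : LinearMap.mul' k K ((TensorProduct.map φm φ.toLinearMap)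
          (Δ x - x ⊗ₜ[k] (1 : H) - (1 : H) ⊗ₜ[k] x)) = 0 := hLmain
      rw [hLr, add_zero, map_zero, neg_zero] at hr
      exact hr
  have part1 : ∀ x ∈ I, φm x = 0 := by
    intro x hx
    have hx' : x ∈ ⨆ n, Submodule.restrictScalars k I ⊓ ℬ n := by
      rw [← hIgr]; exact hx
    refine Submodule.iSup_induction (x := x) (motive := fun y => φm y = 0) _ hx'
      ?_ (map_zero _) ?_
    · intro n y hy; exact main n y (Submodule.mem_inf.1 hy).1 (Submodule.mem_inf.1 hy).2
    · intro u v hu hv; rw [map_add, hu, hv, add_zero]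
  refine ⟨part1, ?_⟩
  intro x hx
  have hcx : conv φm φ.toLinearMap x = L (Δ x) := rfl
  rw [hcx]
  obtain ⟨u, hu, v, hv, huv⟩ := Submodule.mem_sup.1 (hΔI x hx)
  rw [← huv, map_add,
    hL_left _ _ (fun a ha => part1 a ha) u hu,
    hL_right _ _ (fun b hb => hφI b hb) v hv, add_zero]
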